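/- Let k, ℓ > 0, let π1 ∈ T_k and π2 ∈ T_ℓ, let t = slmax(π2), and let i be an integer with 1 ≤ i ≤ t. Then C2(π1, π2, i) is a two-stack sortable permutation of length k+ℓ+1. -/

import Mathlib

namespace TSP

theorem foldr_max_mem {α : Type} [LinearOrder α] (x : α) (l : List α) :
    l.foldr max x ∈ x :: l := by
  induction l with
  | nil => simp
  | cons a t ih =>
    simp only [List.foldr_cons]
    rcases max_choice a (t.foldr max x) with h | h <;> rw [h]
    · simp
    · rcases List.mem_cons.mp ih with h' | h'
      · rw [h']; simp
      · exact List.mem_cons.mpr (Or.inr (List.mem_cons.mpr (Or.inr h')))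

theorem length_takeWhile_lt {α : Type} [DecidableEq α] {m : α} {l : List α}
    (h : m ∈ l) : (l.takeWhile (· ≠ m)).length < l.length := by
  have hd : l.dropWhile (· ≠ m) ≠ [] := by
    intro hnil
    have := List.dropWhile_eq_nil_iff.mp hnil m h
    simp at this
  have hsum : (l.takeWhile (· ≠ m)).length + (l.dropWhile (· ≠ m)).length = l.length := by
    rw [← List.length_append, List.takeWhile_append_dropWhile]
  have : 0 < (l.dropWhile (· ≠ m)).length := List.length_pos_iff.mpr hd
  omega

theorem length_tail_dropWhile_lt {α : Type} [DecidableEq α] {m : α} {l : List α}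
    (h : l ≠ []) : ((l.dropWhile (· ≠ m)).tail).length < l.length := by
  have hsum : (l.takeWhile (· ≠ m)).length + (l.dropWhile (· ≠ m)).length = l.length := by
    rw [← List.length_append, List.takeWhile_append_dropWhile]
  have h2 : ((l.dropWhile (· ≠ m)).tail).length = (l.dropWhile (· ≠ m)).length - 1 :=
    List.length_tail
  have : 0 < l.length := List.length_pos_iff.mpr h
  omega

/-- The stack-sorting operator `S`: `S(ε) = ε`, and if `A` is nonempty with
largest element `m` and `A = A_L · (m) · A_R`, then `S(A) = S(A_L) · S(A_R) · (m)`. -/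
def S {α : Type} [LinearOrder α] : List α → List α
  | [] => []
  | x :: l =>
    let m := l.foldr max x
    S ((x :: l).takeWhile (· ≠ m)) ++ S (((x :: l).dropWhile (· ≠ m)).tail) ++ [m]
termination_by l => l.length
decreasing_by
  · exact length_takeWhile_lt (by simpa [List.foldr_attach] using foldr_max_mem x l)
  · exact length_tail_dropWhile_lt (by simp)

/-- The identity permutation `id_n = (1, 2, …, n)` as a list. -/
def idPerm (n : ℕ) : List ℕ := List.range' 1 n

/-- `l` is a permutation of `{1, …, n}` (viewed as a sequence). -/
def IsPermOf (n : ℕ) (l : List ℕ) : Prop := l.Perm (idPerm n)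

/-- `l` is a two-stack sortable permutation (of `{1, …, len l}`). -/
def Is2SS (l : List ℕ) : Prop := IsPermOf l.length l ∧ S (S l) = idPerm l.length

/-- `σ^{+k}`: add `k` to every entry. -/
def shift (k : ℕ) (l : List ℕ) : List ℕ := l.map (· + k)

/-- `σ^{+(k1,m,k2)}`: add `k1` to every entry strictly smaller than `m`, `k2` to the others. -/
def shift3 (k1 m k2 : ℕ) (l : List ℕ) : List ℕ :=
  l.map (fun a => if a < m then a + k1 else a + k2)

/-- Standardization `P(A)`: the permutation of `{1,…,len A}` in the same relative order. -/
def stand (l : List ℕ) : List ℕ := l.map (fun a => (l.filter (fun b => b ≤ a)).length)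

/-- Avoidance of the pattern 231: no positions `i < j < k` with `l(k) < l(i) < l(j)`. -/
def Avoids231 (l : List ℕ) : Prop :=
  ¬ ∃ i j k, i < j ∧ j < k ∧ k < l.length ∧
      l.getD k 0 < l.getD i 0 ∧ l.getD i 0 < l.getD j 0

/-- The list of values of the left-to-right maxima of `l`, in order. -/
def lrMaxima (l : List ℕ) : List ℕ :=
  ((List.range l.length).filter
    (fun i => (l.take i).all (fun b => b < l.getD i 0))).map (fun i => l.getD i 0)

/-- `lmax`: the number of left-to-right maxima. -/
def lmax (l : List ℕ) : ℕ :=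
  (List.range l.length).countP (fun i => (l.take i).all (fun b => b < l.getD i 0))

/-- `rmax`: the number of right-to-left maxima. -/
def rmax (l : List ℕ) : ℕ :=
  (List.range l.length).countP (fun i => (l.drop (i+1)).all (fun b => b < l.getD i 0))

/-- `asc`: the number of ascents. -/
def asc (l : List ℕ) : ℕ :=
  (List.range (l.length - 1)).countP (fun i => l.getD i 0 < l.getD (i+1) 0)

/-- `des`: the number of descents. -/
def des (l : List ℕ) : ℕ :=
  (List.range (l.length - 1)).countP (fun i => l.getD (i+1) 0 < l.getD i 0)

/-- `slmax(π)`: the number of left-to-right maxima of `S(π)`. -/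
def slmax (l : List ℕ) : ℕ := lmax (S l)

/-- `sldes(π)`: the number of entries `a` that precede `a - 1` in `S(π)`. -/
def sldes (l : List ℕ) : ℕ :=
  (List.range (S l).length).countP
    (fun i => ((S l).drop (i+1)).any (fun b => b + 1 = (S l).getD i 0))

/-- The construction `C1(π1, π2) = π1 · (k+ℓ+1) · π2^{+k}`. -/
def C1 (p1 p2 : List ℕ) : List ℕ :=
  p1 ++ (p1.length + p2.length + 1) :: shift p1.length p2

/-- The `i`-th left-to-right maximum `a_i` of `S(π2)` (1-indexed). -/
def lrm (p2 : List ℕ) (i : ℕ) : ℕ := (lrMaxima (S p2)).getD (i - 1) 0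

/-- The construction `C2(π1, π2, i) = π1^{+(0,k,a_i)} · (k+ℓ+1) · π2^{+(k-1,a_i+1,k)}`. -/
def C2 (p1 p2 : List ℕ) (i : ℕ) : List ℕ :=
  shift3 0 p1.length (lrm p2 i) p1 ++
    (p1.length + p2.length + 1) :: shift3 (p1.length - 1) (lrm p2 i + 1) p1.length p2

/-- The decomposition `D(π) = (P(π_ℓ), P(π_r))`, where `π = π_ℓ · (n) · π_r`
with `n` the largest entry of `π`. -/
def D (l : List ℕ) : List ℕ × List ℕ :=
  match l with
  | [] => ([], [])
  | x :: t =>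
    let m := t.foldr max x
    (stand ((x :: t).takeWhile (· ≠ m)), stand (((x :: t).dropWhile (· ≠ m)).tail))

theorem le_foldr_max (l : List ℕ) : ∀ (x : ℕ), ∀ y ∈ x :: l, y ≤ l.foldr max x := by
  induction l with
  | nil => simp
  | cons a t ih =>
    intro x y hy
    simp only [List.foldr_cons]
    rcases List.mem_cons.mp hy with h | h
    · subst h
      exact le_max_of_le_right (ih y y (by simp))
    · rcases List.mem_cons.mp h with h' | h'
      · subst h'; exact le_max_left _ _
      · exact le_max_of_le_right (ih x y (by simp [h']))

theorem foldr_max_eq (x : ℕ) (t : List ℕ) (m : ℕ) (hmem : m ∈ x :: t)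
    (hle : ∀ y ∈ x :: t, y ≤ m) : t.foldr max x = m :=
  le_antisymm (hle _ (foldr_max_mem x t)) (le_foldr_max t x m hmem)

theorem S_cons (x : ℕ) (t : List ℕ) :
    S (x :: t) = S ((x :: t).takeWhile (· ≠ t.foldr max x)) ++
      S (((x :: t).dropWhile (· ≠ t.foldr max x)).tail) ++ [t.foldr max x] := by
  rw [S]

theorem takeWhile_ne_append (L R : List ℕ) (m : ℕ) (h : ∀ x ∈ L, x ≠ m) :
    ((L ++ m :: R).takeWhile (· ≠ m)) = L := by
  induction L with
  | nil => simp [List.takeWhile_cons]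
  | cons a t ih =>
    simp only [List.cons_append, List.takeWhile_cons]
    rw [if_pos (by simpa using h a (by simp)), ih (fun x hx => h x (by simp [hx]))]

theorem dropWhile_ne_append (L R : List ℕ) (m : ℕ) (h : ∀ x ∈ L, x ≠ m) :
    ((L ++ m :: R).dropWhile (· ≠ m)) = m :: R := by
  induction L with
  | nil => simp [List.dropWhile_cons]
  | cons a t ih =>
    simp only [List.cons_append, List.dropWhile_cons]
    rw [if_pos (by simpa using h a (by simp)), ih (fun x hx => h x (by simp [hx]))]

theorem S_split (L R : List ℕ) (m : ℕ) (hL : ∀ x ∈ L, x < m) (hR : ∀ x ∈ R, x < m) :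
    S (L ++ m :: R) = S L ++ S R ++ [m] := by
  have hne : ∀ x ∈ L, x ≠ m := fun x hx => ne_of_lt (hL x hx)
  have hle : ∀ y ∈ L ++ m :: R, y ≤ m := by
    intro y hy
    rcases List.mem_append.mp hy with h | h
    · exact le_of_lt (hL y h)
    · rcases List.mem_cons.mp h with h | h
      · exact le_of_eq h
      · exact le_of_lt (hR y h)
  cases L with
  | nil =>
    have hm : R.foldr max m = m := foldr_max_eq m R m (by simp) (by simpa using hle)
    rw [List.nil_append, S_cons, hm]
    simp [S, List.takeWhile_cons, List.dropWhile_cons]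
  | cons a t =>
    have hm : (t ++ m :: R).foldr max a = m := by
      apply foldr_max_eq
      · simp
      · simpa using hle
    rw [List.cons_append, S_cons, hm, ← List.cons_append,
      takeWhile_ne_append _ _ _ hne, dropWhile_ne_append _ _ _ hne, List.tail_cons]


theorem decomp_at_max (x : ℕ) (t : List ℕ) :
    x :: t = (x :: t).takeWhile (· ≠ t.foldr max x) ++
      t.foldr max x :: ((x :: t).dropWhile (· ≠ t.foldr max x)).tail := by
  set m := t.foldr max x with hm
  have hne : (x :: t).dropWhile (· ≠ m) ≠ [] := by
    intro hnil
    have := List.dropWhile_eq_nil_iff.mp hnil m (foldr_max_mem x t)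
    simp at this
  have hhead : ((x :: t).dropWhile (· ≠ m)).head hne = m := by
    have := List.head_dropWhile_not (fun y => decide (y ≠ m)) hne
    simpa using this
  have hd : (x :: t).dropWhile (· ≠ m) = m :: ((x :: t).dropWhile (· ≠ m)).tail := by
    conv_lhs => rw [← List.cons_head_tail hne, hhead]
  conv_lhs => rw [← List.takeWhile_append_dropWhile (p := fun y => decide (y ≠ m)) (l := x :: t), hd]

theorem S_perm (l : List ℕ) : (S l).Perm l := by
  match l with
  | [] => simp [S]
  | x :: t =>
    rw [S_cons]
    have h1 := S_perm ((x :: t).takeWhile (· ≠ t.foldr max x))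
    have h2 := S_perm (((x :: t).dropWhile (· ≠ t.foldr max x)).tail)
    have p1 := h1.append (h2.append (List.Perm.refl [t.foldr max x]))
    have p2 := (List.perm_append_singleton (t.foldr max x)
      (((x :: t).dropWhile (· ≠ t.foldr max x)).tail)).append_left
      ((x :: t).takeWhile (· ≠ t.foldr max x))
    rw [List.append_assoc]
    refine (p1.trans p2).trans ?_
    rw [← decomp_at_max x t]
termination_by l.length
decreasing_by
  · exact length_takeWhile_lt (foldr_max_mem x t)
  · exact length_tail_dropWhile_lt (by simp)

theorem mem_S_iff {a : ℕ} {l : List ℕ} : a ∈ S l ↔ a ∈ l := (S_perm l).mem_iff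

theorem S_map (f : ℕ → ℕ) (hf : StrictMono f) (l : List ℕ) :
    S (l.map f) = (S l).map f := by
  match l with
  | [] => simp [S]
  | x :: t =>
    have hmf : (t.map f).foldr max (f x) = f (t.foldr max x) := by
      apply foldr_max_eq
      · have := foldr_max_mem x t
        rw [← List.map_cons]
        exact List.mem_map_of_mem (f := f) this
      · intro y hy
        rw [← List.map_cons] at hy
        obtain ⟨b, hb, rfl⟩ := List.mem_map.mp hy
        exact hf.monotone (le_foldr_max t x b hb)
    have hpred : ((fun y => decide (y ≠ f (t.foldr max x))) ∘ f)
        = (fun y => decide (y ≠ t.foldr max x)) := by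
      funext a
      simp [Function.comp, hf.injective.eq_iff]
    rw [List.map_cons, S_cons, hmf, ← List.map_cons, List.takeWhile_map,
      List.dropWhile_map, hpred, ← List.map_tail,
      S_map f hf ((x :: t).takeWhile (· ≠ t.foldr max x)),
      S_map f hf (((x :: t).dropWhile (· ≠ t.foldr max x)).tail),
      S_cons]
    simp
termination_by l.length
decreasing_by
  · exact length_takeWhile_lt (foldr_max_mem x t)
  · exact length_tail_dropWhile_lt (by simp)

/-- 231-avoidance via sublists. -/
def Av (l : List ℕ) : Prop :=
  ∀ x y z : ℕ, [x, y, z].Sublist l → z < x → x < y → False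

theorem Av.sublist {l l' : List ℕ} (h : Av l) (hs : l'.Sublist l) : Av l' :=
  fun x y z hsub => h x y z (hsub.trans hs)

theorem Av_map {f : ℕ → ℕ} (hf : StrictMono f) {l : List ℕ} (h : Av l) :
    Av (l.map f) := by
  intro x y z hsub hzx hxy
  obtain ⟨l', hl', hmap⟩ := List.sublist_map_iff.mp hsub
  match l', hmap with
  | [a, b, c], hmap =>
    simp only [List.map_cons, List.map_nil, List.cons.injEq, and_true] at hmap
    obtain ⟨rfl, rfl, rfl⟩ := hmap
    exact h a b c hl' (hf.lt_iff_lt.mp hzx) (hf.lt_iff_lt.mp hxy)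

theorem mem_pair_sublist {a b : ℕ} {u v : List ℕ} (ha : a ∈ u) (hb : b ∈ v) :
    [a, b].Sublist (u ++ v) :=
  (List.singleton_sublist.mpr ha).append (List.singleton_sublist.mpr hb)

theorem S_pattern (l : List ℕ) (x y z : ℕ) (h : [x, y, z].Sublist l)
    (h1 : z < x) (h2 : x < y) : [x, z].Sublist (S l) := by
  match l with
  | [] => simp at h
  | w :: t =>
    have hmax : ∀ u ∈ w :: t, u ≤ t.foldr max w := le_foldr_max t w
    have hxm : x < t.foldr max w := lt_of_lt_of_le h2 (hmax y (h.subset (by simp)))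
    have hzm : z < t.foldr max w := lt_trans h1 hxm
    rw [S_cons]
    refine List.Sublist.trans ?_ (List.sublist_append_left _ [t.foldr max w])
    rw [decomp_at_max w t] at h
    obtain ⟨s, u, hsu, hsL, huR⟩ := List.sublist_append_iff.mp h
    have hzD : ∀ v : List ℕ, [z].Sublist (t.foldr max w :: v) → z ∈ v := by
      intro v hv
      rcases List.sublist_cons_iff.mp hv with hv | ⟨r, hr, _⟩
      · exact List.singleton_sublist.mp hv
      · exact absurd (by injection hr) (ne_of_lt hzm)
    rcases s with _ | ⟨a1, _ | ⟨a2, _ | ⟨a3, _ | ⟨a4, s⟩⟩⟩⟩ <;>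
      simp only [List.cons_append, List.nil_append, List.cons.injEq, List.nil_eq,
        List.append_eq_nil_iff] at hsu
    · -- s = [], u = [x,y,z]
      subst hsu
      rcases List.sublist_cons_iff.mp huR with hv | ⟨r, hr, _⟩
      · exact (S_pattern _ x y z hv h1 h2).trans (List.sublist_append_right _ _)
      · exact absurd (by injection hr) (ne_of_lt hxm)
    · -- s = [x], u = [y,z]
      obtain ⟨rfl, rfl⟩ := hsu
      have hx : x ∈ S ((w :: t).takeWhile (· ≠ t.foldr max w)) :=
        mem_S_iff.mpr (List.singleton_sublist.mp hsL)
      have hz : z ∈ ((w :: t).dropWhile (· ≠ t.foldr max w)).tail := by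
        rcases List.sublist_cons_iff.mp huR with hv | ⟨r, hr, hrD⟩
        · exact hv.subset (by simp)
        · have : r = [z] := by injection hr with h1 h2; exact h2.symm ▸ rfl
          subst this
          exact hrD.subset (by simp)
      exact mem_pair_sublist hx (mem_S_iff.mpr hz)
    · -- s = [x,y], u = [z]
      obtain ⟨rfl, rfl, rfl⟩ := hsu
      have hx : x ∈ S ((w :: t).takeWhile (· ≠ t.foldr max w)) :=
        mem_S_iff.mpr (hsL.subset (by simp))
      exact mem_pair_sublist hx (mem_S_iff.mpr (hzD _ huR))
    · -- s = [x,y,z], u = []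
      obtain ⟨rfl, rfl, rfl, rfl⟩ := hsu
      exact (S_pattern _ x y z hsL h1 h2).trans (List.sublist_append_left _ _)
    · exact absurd hsu (by simp)
termination_by l.length
decreasing_by
  · exact length_tail_dropWhile_lt (by simp)
  · exact length_takeWhile_lt (foldr_max_mem w t)

theorem Av_of_S_sorted {l : List ℕ} (h : (S l).Pairwise (· < ·)) : Av l := by
  intro x y z hsub hzx hxy
  have := S_pattern l x y z hsub hzx hxy
  have hp : List.Pairwise (· < ·) [x, z] := h.sublist this
  have : x < z := by simpa using hp
  omega

theorem S_sorted (l : List ℕ) (hn : l.Nodup) (ha : Av l) :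
    (S l).Pairwise (· < ·) := by
  match l with
  | [] => simp [S]
  | w :: t =>
    have hmax : ∀ u ∈ w :: t, u ≤ t.foldr max w := le_foldr_max t w
    have hdec := decomp_at_max w t
    set T := (w :: t).takeWhile (· ≠ t.foldr max w) with hT
    set D := ((w :: t).dropWhile (· ≠ t.foldr max w)).tail with hD
    have hTs : T.Sublist (w :: t) := hdec ▸ List.sublist_append_left _ _
    have hDs : D.Sublist (w :: t) := by
      rw [hdec]
      exact ((List.sublist_cons_self _ _).trans (List.sublist_append_right _ _))
    have ihT := S_sorted T (hn.sublist hTs) (ha.sublist hTs)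
    have ihD := S_sorted D (hn.sublist hDs) (ha.sublist hDs)
    have hnd := hdec ▸ hn
    have hTD : ∀ a ∈ T, ∀ b ∈ D, a < b := by
      intro a haT b hbD
      have ham : a ≤ t.foldr max w := hmax a (hTs.subset haT)
      have hane : a ≠ t.foldr max w := by
        have := List.mem_takeWhile_imp haT
        simpa using this
      have halt : a < t.foldr max w := lt_of_le_of_ne ham hane
      have hsub : [a, t.foldr max w, b].Sublist (w :: t) := by
        rw [hdec]
        exact (List.singleton_sublist.mpr haT).append
          (List.cons_sublist_cons.mpr (List.singleton_sublist.mpr hbD))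
      have hba : ¬ b < a := fun hba => ha a (t.foldr max w) b hsub hba halt
      have hab : a ≠ b := by
        intro heq
        have := (List.nodup_append'.mp hnd).2.2
        exact this haT (heq ▸ List.mem_cons_of_mem _ hbD)
      omega
    have hbm : ∀ b ∈ D, b < t.foldr max w := by
      intro b hbD
      have hle : b ≤ t.foldr max w := hmax b (hDs.subset hbD)
      have : t.foldr max w ∉ D := by
        have h21 := (List.nodup_append.mp hnd).2.1
        exact (List.nodup_cons.mp h21).1
      exact lt_of_le_of_ne hle (fun heq => this (heq ▸ hbD))
    have ham' : ∀ a ∈ T, a < t.foldr max w := by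
      intro a haT
      have := List.mem_takeWhile_imp haT
      exact lt_of_le_of_ne (hmax a (hTs.subset haT)) (by simpa using this)
    rw [S_cons]
    rw [List.pairwise_append, List.pairwise_append]
    refine ⟨⟨ihT, ihD, ?_⟩, by simp, ?_⟩
    · intro a haT b hbD
      exact hTD a (mem_S_iff.mp haT) b (mem_S_iff.mp hbD)
    · intro a haTD b hbm'
      simp only [List.mem_singleton] at hbm'
      subst hbm'
      rcases List.mem_append.mp haTD with h | h
      · exact ham' a (mem_S_iff.mp h)
      · exact hbm a (mem_S_iff.mp h)
termination_by l.length
decreasing_by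
  · exact length_takeWhile_lt (foldr_max_mem w t)
  · exact length_tail_dropWhile_lt (by simp)

theorem lrm_spec (p2 : List ℕ) (i : ℕ) (hi1 : 1 ≤ i) (hi2 : i ≤ slmax p2) :
    ∃ B1 B2 : List ℕ, S p2 = B1 ++ (lrm p2 i) :: B2 ∧ ∀ w ∈ B1, w < lrm p2 i := by
  set B := S p2 with hBdef
  set P : ℕ → Bool := fun j => (B.take j).all (fun b => b < B.getD j 0) with hP
  have hlen : (lrMaxima B).length = slmax p2 := by
    simp [lrMaxima, slmax, lmax, List.countP_eq_length_filter, hP, hBdef]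
  have hilt : i - 1 < (lrMaxima B).length := by omega
  have hflt : i - 1 < ((List.range B.length).filter P).length := by
    have := hilt
    simp only [lrMaxima, List.length_map] at this
    exact this
  set j := ((List.range B.length).filter P)[i-1] with hj
  have hjmem : j ∈ (List.range B.length).filter P := List.getElem_mem hflt
  have hjlt : j < B.length := by
    have := (List.mem_filter.mp hjmem).1
    simpa using this
  have hPj : P j = true := (List.mem_filter.mp hjmem).2
  have hlrm : lrm p2 i = B.getD j 0 := by
    rw [lrm, ← hBdef, List.getD_eq_getElem _ _ hilt]
    simp only [lrMaxima, List.getElem_map]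
    rfl
  have hgd : B.getD j 0 = B[j] := List.getD_eq_getElem _ _ hjlt
  refine ⟨B.take j, B.drop (j+1), ?_, ?_⟩
  · rw [hlrm, hgd, ← List.drop_eq_getElem_cons hjlt, List.take_append_drop]
  · intro w hw
    rw [hlrm]
    have := List.all_eq_true.mp hPj w hw
    simpa using this

def fFun (k ai : ℕ) : ℕ → ℕ := fun a => if a < k then a + 0 else a + ai
def gFun (k ai : ℕ) : ℕ → ℕ := fun a => if a < ai + 1 then a + (k - 1) else a + k

theorem fFun_mono (k ai : ℕ) : StrictMono (fFun k ai) := by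
  intro a b hab; simp only [fFun]; split_ifs <;> omega

theorem gFun_mono (k ai : ℕ) : StrictMono (gFun k ai) := by
  intro a b hab; simp only [gFun]; split_ifs <;> omega

theorem C2_eq (p1 p2 : List ℕ) (i : ℕ) :
    C2 p1 p2 i = p1.map (fFun p1.length (lrm p2 i)) ++
      (p1.length + p2.length + 1) :: p2.map (gFun p1.length (lrm p2 i)) := rfl

theorem idPerm_sorted (n : ℕ) : (idPerm n).Pairwise (· < ·) := List.pairwise_lt_range' (s := 1) (n := n)

theorem idPerm_nodup (n : ℕ) : (idPerm n).Nodup := List.nodup_range' (s := 1) (n := n)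

theorem mem_idPerm {a n : ℕ} : a ∈ idPerm n ↔ 1 ≤ a ∧ a ≤ n := by
  rw [idPerm, List.mem_range'_1]; omega

theorem shuffle (E1 E2 E4 : List ℕ) (c n : ℕ) :
    ((E1 ++ [c]) ++ n :: (E2 ++ E4)).Perm (E1 ++ (E2 ++ ([c] ++ (E4 ++ [n])))) := by
  have h1 : ((E1 ++ [c]) ++ n :: (E2 ++ E4)) = E1 ++ ([c] ++ (n :: (E2 ++ E4))) := by simp
  rw [h1]
  refine List.Perm.append_left E1 ?_
  simp only [List.singleton_append]
  have p1 : (n :: (E2 ++ E4)).Perm (E2 ++ (E4 ++ [n])) :=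
    (List.perm_append_singleton n (E2 ++ E4)).symm.trans (by rw [List.append_assoc])
  exact (List.Perm.cons c p1).trans List.perm_middle.symm

/-- For `k, ℓ > 0`, `π1 ∈ T_k`, `π2 ∈ T_ℓ`, `t = slmax(π2)` and `1 ≤ i ≤ t`,
`C2(π1, π2, i)` is a two-stack sortable permutation of length `k + ℓ + 1`. -/
theorem C2_valid (k ℓ : ℕ) (hk : 0 < k) (hℓ : 0 < ℓ) (π1 π2 : List ℕ)
    (h1 : π1.length = k) (h1' : Is2SS π1) (h2 : π2.length = ℓ) (h2' : Is2SS π2)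
    (t : ℕ) (ht : t = slmax π2) (i : ℕ) (hi1 : 1 ≤ i) (hi2 : i ≤ t) :
    (C2 π1 π2 i).length = k + ℓ + 1 ∧ Is2SS (C2 π1 π2 i) := by
  obtain ⟨hp1, hs1⟩ := h1'
  obtain ⟨hp2, hs2⟩ := h2'
  rw [h1] at hp1 hs1
  rw [h2] at hp2 hs2
  have hp1' : π1.Perm (idPerm k) := hp1
  have hp2' : π2.Perm (idPerm ℓ) := hp2
  set ai := lrm π2 i with hai
  obtain ⟨B1, B2, hB, hB1⟩ := lrm_spec π2 i hi1 (ht ▸ hi2)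
  rw [← hai] at hB hB1
  have hBperm : (S π2).Perm (idPerm ℓ) := (S_perm π2).trans hp2'
  have hAperm : (S π1).Perm (idPerm k) := (S_perm π1).trans hp1'
  have haiB : ai ∈ S π2 := by rw [hB]; simp
  have hai1 : 1 ≤ ai := (mem_idPerm.mp (hBperm.subset haiB)).1
  have hai2 : ai ≤ ℓ := (mem_idPerm.mp (hBperm.subset haiB)).2
  have hAvA : Av (S π1) := Av_of_S_sorted (by rw [hs1]; exact idPerm_sorted k)
  have hAvB : Av (S π2) := Av_of_S_sorted (by rw [hs2]; exact idPerm_sorted ℓ)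
  have hnodupB : (S π2).Nodup := hBperm.symm.nodup (idPerm_nodup ℓ)
  have hmemπ1 : ∀ a ∈ π1, 1 ≤ a ∧ a ≤ k := fun a ha => mem_idPerm.mp (hp1'.subset ha)
  have hmemπ2 : ∀ a ∈ π2, 1 ≤ a ∧ a ≤ ℓ := fun a ha => mem_idPerm.mp (hp2'.subset ha)
  have hmemA : ∀ a ∈ S π1, 1 ≤ a ∧ a ≤ k := fun a ha => mem_idPerm.mp (hAperm.subset ha)
  have hmemB : ∀ a ∈ S π2, 1 ≤ a ∧ a ≤ ℓ := fun a ha => mem_idPerm.mp (hBperm.subset ha)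
  set f := fFun k ai with hf
  set g := gFun k ai with hg
  have hfmono : StrictMono f := fFun_mono k ai
  have hgmono : StrictMono g := gFun_mono k ai
  have hC2 : C2 π1 π2 i = π1.map f ++ (k + ℓ + 1) :: π2.map g := by
    rw [C2_eq, h1, h2, ← hai, ← hf, ← hg]
  have hlenC2 : (C2 π1 π2 i).length = k + ℓ + 1 := by
    rw [hC2]
    simp only [List.length_append, List.length_map, List.length_cons, h1, h2]
    omega
  have hfb : ∀ w ∈ π1.map f, w < k + ℓ + 1 := by
    intro w hw
    obtain ⟨a, ha, rfl⟩ := List.mem_map.mp hw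
    have := hmemπ1 a ha
    simp only [hf, fFun]
    split_ifs <;> omega
  have hgb : ∀ w ∈ π2.map g, w < k + ℓ + 1 := by
    intro w hw
    obtain ⟨a, ha, rfl⟩ := List.mem_map.mp hw
    have := hmemπ2 a ha
    simp only [hg, gFun]
    split_ifs <;> omega
  have hSC2 : S (C2 π1 π2 i) = (S π1).map f ++ (S π2).map g ++ [k + ℓ + 1] := by
    rw [hC2, S_split _ _ _ hfb hgb, S_map f hfmono, S_map g hgmono]
  -- value computations on idPerm
  have hmapf : (π1.map f).Perm (List.range' 1 (k - 1) ++ [k + ai]) := by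
    refine (hp1'.map f).trans ?_
    have e0 : idPerm k = List.range' 1 (k - 1) ++ [k] := by
      rw [idPerm]
      conv_lhs => rw [show k = (k - 1) + 1 by omega]
      rw [List.range'_concat]
      congr 1
      rw [show 1 + 1 * (k - 1) = k by omega]
    rw [e0, List.map_append]
    have e1 : (List.range' 1 (k - 1)).map f = List.range' 1 (k - 1) := by
      rw [List.map_congr_left (g := id) (fun a ha => ?_), List.map_id]
      have := List.mem_range'_1.mp ha
      simp only [hf, fFun, id]
      rw [if_pos (by omega)]
      omega
    have e2 : ([k] : List ℕ).map f = [k + ai] := by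
      simp only [List.map_cons, List.map_nil, hf, fFun]
      rw [if_neg (by omega)]
    rw [e1, e2]
  have hmapg : (π2.map g).Perm
      (List.range' k ai ++ List.range' (k + ai + 1) (ℓ - ai)) := by
    refine (hp2'.map g).trans ?_
    have e0 : idPerm ℓ = List.range' 1 ai ++ List.range' (1 + ai) (ℓ - ai) := by
      rw [idPerm]
      have h := List.range'_append (s := 1) (m := ai) (n := ℓ - ai) (step := 1)
      simp only [one_mul] at h
      rw [show ai + (ℓ - ai) = ℓ by omega] at h
      exact h.symm
    rw [e0, List.map_append]
    have e1 : (List.range' 1 ai).map g = List.range' k ai := by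
      have hcg : (List.range' 1 ai).map g = (List.range' 1 ai).map (fun a => (k - 1) + a) := by
        refine List.map_congr_left (fun a ha => ?_)
        have := List.mem_range'_1.mp ha
        simp only [hg, gFun]
        rw [if_pos (by omega)]
        omega
      rw [hcg, List.map_add_range']
      congr 1
      omega
    have e2 : (List.range' (1 + ai) (ℓ - ai)).map g = List.range' (k + ai + 1) (ℓ - ai) := by
      have hcg : (List.range' (1 + ai) (ℓ - ai)).map g
          = (List.range' (1 + ai) (ℓ - ai)).map (fun a => k + a) := by
        refine List.map_congr_left (fun a ha => ?_)
        have := List.mem_range'_1.mp ha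
        simp only [hg, gFun]
        rw [if_neg (by omega)]
        omega
      rw [hcg, List.map_add_range']
      congr 1
      omega
    rw [e1, e2]
  have hidsplit : idPerm (k + ℓ + 1) = List.range' 1 (k - 1) ++
      (List.range' k ai ++ ([k + ai] ++ (List.range' (k + ai + 1) (ℓ - ai) ++ [k + ℓ + 1]))) := by
    have e45 : List.range' (k + ai + 1) (ℓ - ai) ++ [k + ℓ + 1]
        = List.range' (k + ai + 1) (ℓ - ai + 1) := by
      have h := List.range'_append (s := k + ai + 1) (m := ℓ - ai) (n := 1) (step := 1)
      simp only [one_mul, List.range'_one] at h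
      rw [show k + ai + 1 + (ℓ - ai) = k + ℓ + 1 by omega] at h
      exact h
    have e3 : [k + ai] ++ List.range' (k + ai + 1) (ℓ - ai + 1)
        = List.range' (k + ai) (ℓ - ai + 2) := by
      have h := List.range'_append (s := k + ai) (m := 1) (n := ℓ - ai + 1) (step := 1)
      simp only [one_mul, List.range'_one] at h
      rw [show k + ai + 1 * 1 = k + ai + 1 by omega] at h
      rw [show 1 + (ℓ - ai + 1) = ℓ - ai + 2 by omega] at h
      exact h
    have e2' : List.range' k ai ++ List.range' (k + ai) (ℓ - ai + 2)
        = List.range' k (ℓ + 2) := by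
      have h := List.range'_append (s := k) (m := ai) (n := ℓ - ai + 2) (step := 1)
      simp only [one_mul] at h
      rw [show ai + (ℓ - ai + 2) = ℓ + 2 by omega] at h
      exact h
    have e1' : List.range' 1 (k - 1) ++ List.range' k (ℓ + 2)
        = List.range' 1 (k + ℓ + 1) := by
      have h := List.range'_append (s := 1) (m := k - 1) (n := ℓ + 2) (step := 1)
      simp only [one_mul] at h
      rw [show 1 + (k - 1) = k by omega, show k - 1 + (ℓ + 2) = k + ℓ + 1 by omega] at h
      exact h
    rw [e45, e3, e2', e1', idPerm]
  have hC2perm : (C2 π1 π2 i).Perm (idPerm (k + ℓ + 1)) := by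
    rw [hC2, hidsplit]
    exact (hmapf.append ((hmapg).cons (k + ℓ + 1))).trans
      (shuffle (List.range' 1 (k - 1)) (List.range' k ai)
        (List.range' (k + ai + 1) (ℓ - ai)) (k + ai) (k + ℓ + 1))
  have hAvFA : Av ((S π1).map f) := Av_map hfmono hAvA
  have hAvGB : Av ((S π2).map g) := Av_map hgmono hAvB
  have hFAval : ∀ w ∈ (S π1).map f, w ≤ k - 1 ∨ w = k + ai := by
    intro w hw
    obtain ⟨a, ha, rfl⟩ := List.mem_map.mp hw
    have := hmemA a ha
    simp only [hf, fFun]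
    split_ifs with h
    · left; omega
    · right; omega
  have hgval : ∀ b, (b < ai + 1 ∧ g b = b + (k - 1)) ∨ (ai + 1 ≤ b ∧ g b = b + k) := by
    intro b
    simp only [hg, gFun]
    split_ifs with h
    · exact Or.inl ⟨h, rfl⟩
    · exact Or.inr ⟨by omega, rfl⟩
  have hGBrange : ∀ w ∈ (S π2).map g, k ≤ w ∧ w ≤ k + ℓ := by
    intro w hw
    obtain ⟨a, ha, rfl⟩ := List.mem_map.mp hw
    have h1' := hmemB a ha
    rcases hgval a with ⟨h3, h4⟩ | ⟨h3, h4⟩ <;> rw [h4] <;> omega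
  have hFG : ∀ w ∈ (S π1).map f ++ (S π2).map g, w ≤ k + ℓ := by
    intro w hw
    rcases List.mem_append.mp hw with h | h
    · rcases hFAval w h with h' | h' <;> omega
    · exact ((hGBrange w h).2)
  have haintB2 : ai ∉ B2 := by
    rw [hB] at hnodupB
    exact (List.nodup_cons.mp (List.nodup_append.mp hnodupB).2.1).1
  have hAvSC2 : Av (S (C2 π1 π2 i)) := by
    rw [hSC2]
    intro x y z hsub hzx hxy
    obtain ⟨s, u, hsu, hsL, huR⟩ := List.sublist_append_iff.mp hsub
    rcases List.sublist_singleton.mp huR with rfl | rfl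
    · -- u = []
      rw [List.append_nil] at hsu
      subst hsu
      obtain ⟨s', u', hsu', hsL', huR'⟩ := List.sublist_append_iff.mp hsL
      rcases s' with _ | ⟨a1, _ | ⟨a2, _ | ⟨a3, _ | ⟨a4, s'⟩⟩⟩⟩ <;>
        simp only [List.cons_append, List.nil_append, List.cons.injEq] at hsu'
      · subst hsu'
        exact hAvGB x y z huR' hzx hxy
      · -- s' = [x], u' = [y, z]
        obtain ⟨rfl, rfl⟩ := hsu'
        have hxFA : x ∈ (S π1).map f := List.singleton_sublist.mp hsL'
        obtain ⟨l'', hl'', hmapYZ⟩ := List.sublist_map_iff.mp huR'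
        match l'', hmapYZ with
        | [b, c], hmapYZ =>
        simp only [List.map_cons, List.map_nil, List.cons.injEq, and_true] at hmapYZ
        obtain ⟨rfl, rfl⟩ := hmapYZ
        have hbB : b ∈ S π2 := hl''.subset (by simp)
        have hcB : c ∈ S π2 := hl''.subset (by simp)
        have hbmem := hmemB b hbB
        have hcmem := hmemB c hcB
        have hxv := hFAval x hxFA
        have hcge : k ≤ g c := (hGBrange _ (List.mem_map_of_mem (f := g) hcB)).1
        rcases hgval b with ⟨hb1, hb2⟩ | ⟨hb1, hb2⟩ <;>
          rcases hgval c with ⟨hc1, hc2⟩ | ⟨hc1, hc2⟩ <;>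
          rw [hb2] at hxy <;> rw [hc2] at hzx hcge
        · omega
        · omega
        · -- b large, c small : the interesting case
          have hbc : [b, c].Sublist (B1 ++ ai :: B2) := hB ▸ hl''
          obtain ⟨u2, v2, huv2, hu2, hv2⟩ := List.sublist_append_iff.mp hbc
          have hbnotB1 : b ∉ B1 := fun hm => by have := hB1 b hm; omega
          rcases u2 with _ | ⟨b1, _ | ⟨b2, u2⟩⟩ <;>
            simp only [List.cons_append, List.nil_append, List.cons.injEq] at huv2
          · subst huv2
            rcases List.sublist_cons_iff.mp hv2 with hv | ⟨r, hr, hrB⟩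
            · have hcB2 : c ∈ B2 := hv.subset (by simp)
              have hcai : c ≠ ai := fun h => haintB2 (h ▸ hcB2)
              have hsub3 : [ai, b, c].Sublist (S π2) := by
                rw [hB]
                exact (List.nil_sublist B1).append (List.cons_sublist_cons.mpr hv)
              exact hAvB ai b c hsub3 (by omega) (by omega)
            · have hbai : b = ai := by injection hr
              omega
          · obtain ⟨rfl, hv'⟩ := huv2
            exact hbnotB1 (hu2.subset (by simp))
          · obtain ⟨rfl, h2', h3'⟩ := huv2
            exact hbnotB1 (hu2.subset (by simp))
        · omega
      · -- s' = [x, y], u' = [z]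
        obtain ⟨rfl, rfl, rfl⟩ := hsu'
        have hz : z ∈ (S π2).map g := List.singleton_sublist.mp huR'
        have hx : x ∈ (S π1).map f := hsL'.subset (by simp)
        have hy : y ∈ (S π1).map f := hsL'.subset (by simp)
        have h1x := hFAval x hx
        have h1y := hFAval y hy
        have h1z := (hGBrange z hz).1
        omega
      · -- s' = [x, y, z], u' = []
        obtain ⟨rfl, rfl, rfl, hu0⟩ := hsu'
        exact hAvFA x y z hsL' hzx hxy
      · obtain ⟨_, _, _, hbad⟩ := hsu'
        simp at hbad
    · -- u = [k + ℓ + 1]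
      have hzN : z = k + ℓ + 1 := by
        have h := congrArg List.getLast? hsu
        rw [List.getLast?_concat] at h
        simp at h
        omega
      have hxmem : x ∈ s ++ [k + ℓ + 1] := by
        have hx3 : x ∈ [x, y, z] := by simp
        rw [hsu] at hx3
        exact hx3
      rcases List.mem_append.mp hxmem with h | h
      · have := hFG x (hsL.subset h)
        omega
      · simp at h
        have hymem : y ∈ s ++ [k + ℓ + 1] := by
          have hy3 : y ∈ [x, y, z] := by simp
          rw [hsu] at hy3
          exact hy3
        rcases List.mem_append.mp hymem with h' | h'
        · have := hFG y (hsL.subset h')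
          omega
        · simp at h'
          omega
  have hnodupSC2 : (S (C2 π1 π2 i)).Nodup :=
    (((S_perm _).trans hC2perm).symm).nodup (idPerm_nodup _)
  have hsorted := S_sorted _ hnodupSC2 hAvSC2
  haveI : Std.Antisymm (α := ℕ) (· < ·) := ⟨fun a b h h' => absurd h' (lt_asymm h)⟩
  have hfinal : S (S (C2 π1 π2 i)) = idPerm (k + ℓ + 1) :=
    List.Perm.eq_of_pairwise' hsorted (idPerm_sorted _)
      ((S_perm _).trans ((S_perm _).trans hC2perm))
  refine ⟨hlenC2, ?_, ?_⟩
  · show (C2 π1 π2 i).Perm (idPerm (C2 π1 π2 i).length)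
    rw [hlenC2]
    exact hC2perm
  · show S (S (C2 π1 π2 i)) = idPerm (C2 π1 π2 i).length
    rw [hlenC2]
    exact hfinal

end TSP
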